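/- The representation S = ⊕_{v ∈ 𝔻_{n,∞}} S_v (the direct sum of all simple representations) of the poset 𝔻_{n,∞} is pointwise finite-dimensional, but there is no epimorphism (i.e., no natural transformation that is surjective at every vertex) from a finite direct sum of representable projectives P_{v₁} ⊕ ⋯ ⊕ P_{v_r} onto S. In particular, the category of pointwise finite-dimensional representations of 𝔻_{n,∞} strictly contains the subcategory of representations finitely generated by representable projectives. -/

import Mathlib

/-!
STATEMENT 12: The direct sum `S = ⊕_v S_v` of all simple representations of the poset
`𝔻_{n,∞}` is pointwise finite-dimensional, but there is no epimorphism (no natural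
transformation surjective at every vertex) from a finite direct sum of representable
projectives `P_{v₁} ⊕ ⋯ ⊕ P_{v_r}` onto `S`.  In particular, the category of pointwise
finite-dimensional representations of `𝔻_{n,∞}` strictly contains the subcategory of
representations finitely generated by representable projectives.

The poset `𝔻_{n+1,∞}` (covering all `n ≥ 1`): the linear order `C` (blocks
`B₁⁺ < B₂ < ⋯ < B_{n+1} < B₁⁻`) together with two incomparable elements `t1, t2`
greater than everything in `C`.  The direct sum of all simples has value `k` at every
vertex, with structure map along `v ≤ w` the identity for `v = w` and `0` otherwise;
the representable projective `P_v` has value `k` at `w ≥ v` and `0` elsewhere, with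
identities between the nonzero values (here a value `k` resp. `0` is encoded as the
one- resp. zero-dimensional space of functions `PLift (v ≤ w) → k`).
-/

open scoped Classical

namespace DInfty


/-- Marked-point data indexing the linear order `C`. -/
abbrev MP (n : ℕ) := Fin (n + 1) × ℤ

/-- Membership in `C`: everything except `(1,-1)` and `(1,0)` (here `(0,-1)`, `(0,0)`). -/
def InC (n : ℕ) (p : MP n) : Prop := p ≠ (0, -1) ∧ p ≠ (0, 0)

/-- Block index: `B₁⁺` is block `0`, `B_j` (`p.1 ≠ 0`) is block `p.1`, `B₁⁻` is block
`n+1`. -/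
def blk (n : ℕ) (p : MP n) : ℕ :=
  if p.1 = 0 then (if 1 ≤ p.2 then 0 else n + 1) else p.1.val

/-- The linear order of `C`. -/
def Cle (n : ℕ) (p q : MP n) : Prop :=
  blk n p < blk n q ∨ (blk n p = blk n q ∧ p.2 ≤ q.2)

/-- The vertices of the poset `𝔻_{n+1,∞}`: the elements of `C` and two extra elements
`t1 = (1,-1)` and `t2 = (1,-1')`. -/
inductive DVtx (n : ℕ) where
  | c : {p : MP n // InC n p} → DVtx n
  | t1 : DVtx n
  | t2 : DVtx n

/-- The order of `𝔻_{n+1,∞}`: `C` is ordered as above, `t1` and `t2` are incomparable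
to each other and greater than every element of `C`. -/
def Dle (n : ℕ) : DVtx n → DVtx n → Prop
  | .c p, .c q => Cle n p.1 q.1
  | .c _, .t1 => True
  | .c _, .t2 => True
  | .t1, .t1 => True
  | .t2, .t2 => True
  | _, _ => False

/-- A representation of the poset with vertex set `DVtx n` and order relation `r`, over
the field `k`: a functor to `k`-vector spaces. -/
structure DRep (n : ℕ) (k : Type) [Field k] (r : DVtx n → DVtx n → Prop) where
  V : DVtx n → Type
  [inst : ∀ v, AddCommGroup (V v)]
  [mod : ∀ v, Module k (V v)]
  map : ∀ {v w : DVtx n}, r v w → (V v →ₗ[k] V w)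
  map_id : ∀ (v : DVtx n) (h : r v v), map h = LinearMap.id
  map_comp : ∀ {u v w : DVtx n} (h₁ : r u v) (h₂ : r v w) (h₃ : r u w),
    map h₃ = (map h₂).comp (map h₁)

attribute [instance] DRep.inst DRep.mod

/-- Morphisms of representations: natural transformations. -/
structure DHom {n : ℕ} {k : Type} [Field k] {r : DVtx n → DVtx n → Prop}
    (M N : DRep n k r) where
  app : ∀ v, M.V v →ₗ[k] N.V v
  natural : ∀ {v w : DVtx n} (h : r v w),
    (app w).comp (M.map h) = (N.map h).comp (app v)

/-- Pointwise finite-dimensionality. -/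
def Pwf {n : ℕ} {k : Type} [Field k] {r : DVtx n → DVtx n → Prop}
    (M : DRep n k r) : Prop :=
  ∀ v, FiniteDimensional k (M.V v)

lemma Cle_trans {n : ℕ} {p q s : MP n} (h1 : Cle n p q) (h2 : Cle n q s) :
    Cle n p s := by
  unfold Cle at *
  omega

lemma Cle_antisymm {n : ℕ} {p q : MP n} (h1 : Cle n p q) (h2 : Cle n q p) : p = q := by
  unfold Cle at h1 h2
  have hb : blk n p = blk n q := by omega
  have hsnd : p.2 = q.2 := by omega
  have hfst : p.1 = q.1 := by
    unfold blk at hb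
    by_cases hp : p.1 = 0 <;> by_cases hq : q.1 = 0
    · rw [hp, hq]
    · exfalso
      have hqv : q.1.val ≠ 0 := by
        intro h0
        exact hq (Fin.ext (by simpa using h0))
      have hlt := q.1.isLt
      rw [if_pos hp, if_neg hq] at hb
      by_cases h12 : (1 : ℤ) ≤ p.2 <;> simp [h12] at hb <;> omega
    · exfalso
      have hpv : p.1.val ≠ 0 := by
        intro h0
        exact hp (Fin.ext (by simpa using h0))
      have hlt := p.1.isLt
      rw [if_neg hp, if_pos hq] at hb
      by_cases h12 : (1 : ℤ) ≤ q.2 <;> simp [h12] at hb <;> omega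
    · rw [if_neg hp, if_neg hq] at hb
      exact Fin.ext hb
  exact Prod.ext hfst hsnd

lemma Dle_trans {n : ℕ} {u v w : DVtx n} (h1 : Dle n u v) (h2 : Dle n v w) :
    Dle n u w := by
  cases u <;> cases v <;> cases w <;>
    first
      | exact False.elim h1
      | exact False.elim h2
      | trivial
      | exact Cle_trans h1 h2

lemma Dle_antisymm {n : ℕ} {u v : DVtx n} (h1 : Dle n u v) (h2 : Dle n v u) :
    u = v := by
  cases u <;> cases v <;>
    first
      | rfl
      | exact False.elim h1
      | exact False.elim h2
      | exact congrArg DVtx.c (Subtype.ext (Cle_antisymm h1 h2))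

/-- The representation associated with an up-closed set of vertices `S`: value `k` on
`S` (encoded as `PLift (S v) → k`), value `0` elsewhere, identities between the nonzero
values. -/
noncomputable def upRep (n : ℕ) (k : Type) [Field k] (S : DVtx n → Prop)
    (hS : ∀ {u v : DVtx n}, Dle n u v → S u → S v) : DRep n k (Dle n) where
  V v := PLift (S v) → k
  map {v w} _h :=
    { toFun := fun f _hw => if hv : S v then f ⟨hv⟩ else 0
      map_add' := by
        intro f g
        funext hw
        by_cases hv : S v <;> simp [hv]
      map_smul' := by
        intro c f
        funext hw
        by_cases hv : S v <;> simp [hv] }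
  map_id := by
    intro v h
    refine LinearMap.ext fun f => funext fun hv => ?_
    show (if hv' : S v then f ⟨hv'⟩ else 0) = f hv
    rw [dif_pos hv.down]
  map_comp := by
    intro u v w h₁ h₂ h₃
    refine LinearMap.ext fun f => funext fun hw => ?_
    show (if hu : S u then f ⟨hu⟩ else 0)
        = (if hv : S v then (if hu : S u then f ⟨hu⟩ else 0) else 0)
    by_cases hu : S u
    · have hv : S v := hS h₁ hu
      rw [dif_pos hu, dif_pos hv]
    · rw [dif_neg hu]
      by_cases hv : S v
      · rw [dif_pos hv]
      · rw [dif_neg hv]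

/-- The representable projective `P_v`. -/
noncomputable def Proj (n : ℕ) (k : Type) [Field k] (v : DVtx n) : DRep n k (Dle n) :=
  upRep n k (fun w => Dle n v w) (fun h hv => Dle_trans hv h)

/-- The finite direct sum of a family of representations. -/
noncomputable def dsum {n : ℕ} {k : Type} [Field k] {r : ℕ}
    (M : Fin r → DRep n k (Dle n)) : DRep n k (Dle n) where
  V w := ∀ i, (M i).V w
  map h := LinearMap.pi fun i => ((M i).map h).comp (LinearMap.proj i)
  map_id := by
    intro v h
    refine LinearMap.ext fun f => funext fun i => ?_
    show ((M i).map h) (f i) = f i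
    rw [(M i).map_id v h]
    rfl
  map_comp := by
    intro u v w h₁ h₂ h₃
    refine LinearMap.ext fun f => funext fun i => ?_
    show ((M i).map h₃) (f i) = ((M i).map h₂) (((M i).map h₁) (f i))
    rw [(M i).map_comp h₁ h₂ h₃]
    rfl

/-- The direct sum `S = ⊕_v S_v` of all the simple representations: value `k` at every
vertex, structure map along `v ≤ w` equal to the identity if `v = w` and to `0`
otherwise. -/
noncomputable def simpSum (n : ℕ) (k : Type) [Field k] : DRep n k (Dle n) where
  V _ := k
  map {v w} _ := if v = w then LinearMap.id else 0
  map_id := by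
    intro v h
    simp
  map_comp := by
    intro u v w h₁ h₂ h₃
    by_cases huv : u = v
    · subst huv
      by_cases huw : u = w
      · subst huw
        simp
      · simp [huw]
    · have huw : u ≠ w := fun he => huv (by subst he; exact Dle_antisymm h₁ h₂)
      simp [huv, huw]

lemma Dle_refl {n : ℕ} (v : DVtx n) : Dle n v v := by
  cases v <;> first
    | trivial
    | exact Or.inr ⟨rfl, le_refl _⟩

/-- `S = ⊕_v S_v` is pointwise finite-dimensional, but no finite direct
sum of representable projectives admits a natural transformation onto `S` that is
surjective at every vertex; in particular `S` is pointwise finite-dimensional but not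
finitely generated by representable projectives. -/
theorem simpSum_pwf_not_finitely_generated (n : ℕ) (k : Type) [Field k] :
    Pwf (simpSum n k) ∧
    ¬ ∃ (r : ℕ) (vs : Fin r → DVtx n)
        (φ : DHom (dsum fun i => Proj n k (vs i)) (simpSum n k)),
        ∀ w, Function.Surjective (φ.app w) := by
  constructor
  · intro v
    exact inferInstanceAs (FiniteDimensional k k)
  · rintro ⟨r, vs, φ, hsurj⟩
    -- a vertex not in the range of `vs`
    have hg : Function.Injective (fun m : ℕ =>
        (DVtx.c ⟨(0, (m : ℤ) + 1), by
          constructor <;> (intro h; injection h with h1 h2; omega)⟩ : DVtx n)) := by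
      intro a b hab
      simp only [DVtx.c.injEq, Subtype.mk.injEq, Prod.mk.injEq] at hab
      have hab2 := congrArg (fun p : {p : MP n // InC n p} => p.1.2) hab
      simp only at hab2
      omega
    have hnot : ¬ Set.range (fun m : ℕ =>
        (DVtx.c ⟨(0, (m : ℤ) + 1), by
          constructor <;> (intro h; injection h with h1 h2; omega)⟩ : DVtx n))
        ⊆ Set.range vs := fun hsub =>
      (Set.infinite_range_of_injective hg) ((Set.finite_range vs).subset hsub)
    obtain ⟨w, -, hw⟩ : ∃ w ∈ Set.range (fun m : ℕ =>
        (DVtx.c ⟨(0, (m : ℤ) + 1), by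
          constructor <;> (intro h; injection h with h1 h2; omega)⟩ : DVtx n)),
        w ∉ Set.range vs := by
      by_contra h
      push_neg at h
      exact hnot fun x hx => h x hx
    have hne : ∀ i, vs i ≠ w := fun i h => hw ⟨i, h⟩
    -- the map `φ.app w` is zero
    have hzero : ∀ x, φ.app w x = 0 := by
      intro x
      have hx : x = ∑ i, Pi.single i (x i) := (Finset.univ_sum_single x).symm
      rw [hx]
      erw [map_sum]
      refine Finset.sum_eq_zero fun i _ => ?_
      by_cases hle : Dle n (vs i) w
      · -- use naturality along `vs i ≤ w`
        have hnat := φ.natural hle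
        have hsimp : (simpSum n k).map hle = 0 := by
          show (if vs i = w then LinearMap.id else 0) = 0
          rw [if_neg (hne i)]
        obtain ⟨z, hz⟩ : ∃ z, ((dsum fun j => Proj n k (vs j)).map hle) z
            = Pi.single i (x i) := by
          refine ⟨Pi.single i (fun _ => x i ⟨hle⟩), ?_⟩
          funext j
          show ((Proj n k (vs j)).map hle)
              (Pi.single (M := fun j => (Proj n k (vs j)).V (vs i)) i
                (fun _ => x i ⟨hle⟩) j)
              = Pi.single (M := fun j => (Proj n k (vs j)).V w) i (x i) j
          by_cases hji : j = i
          · subst hji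
            rw [Pi.single_eq_same]
            erw [Pi.single_eq_same]
            funext hw'
            show (if hv : Dle n (vs j) (vs j) then
                (fun _ : PLift (Dle n (vs j) (vs j)) => x j (PLift.up hle))
                  (PLift.up hv) else 0) = x j hw'
            rw [dif_pos (Dle_refl _)]
          · erw [Pi.single_eq_of_ne hji, Pi.single_eq_of_ne hji, map_zero]
        calc φ.app w (Pi.single i (x i))
            = ((φ.app w).comp ((dsum fun j => Proj n k (vs j)).map hle)) z := by
              rw [LinearMap.comp_apply, hz]
          _ = (((simpSum n k).map hle).comp (φ.app (vs i))) z := by rw [hnat]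
          _ = 0 := by rw [hsimp]; rfl
      · -- the component space is zero
        have hxz : x i = 0 := funext fun p => absurd p.down hle
        rw [hxz]
        erw [show (Pi.single i (0 : PLift (Dle n (vs i) w) → k))
            = (0 : ∀ j, (Proj n k (vs j)).V w) from Pi.single_zero i, map_zero]
    have hnt : Nontrivial ((simpSum n k).V w) := inferInstanceAs (Nontrivial k)
    obtain ⟨a, b, hab⟩ := hnt
    obtain ⟨xa, hxa⟩ := hsurj w a
    obtain ⟨xb, hxb⟩ := hsurj w b
    exact hab (by rw [← hxa, ← hxb, hzero xa, hzero xb])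

end DInfty
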